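/- Let κ : [0,2π] → ℝ be continuous, and suppose u : [0,2π] → ℝ³ is a C¹ curve with |u(s)| = 1, |u'(s)| = κ(s) for all s, and ∫₀^{2π} u(s) ds = 0. Then for every ψ in the Sobolev space H¹ of 2π-periodic real functions with ∫₀^{2π} ψ² ds = 1, one has ∫₀^{2π} (|ψ'(s)|² + κ(s)² ψ(s)²) ds ≥ 1/4. -/

import Mathlib

open Real intervalIntegral MeasureTheory Filter Topology

local notation "⟪" x ", " y "⟫" => @inner ℝ _ _ x y


noncomputable def myct (θ s : ℝ) : ℝ := Real.cos ((s - θ)/2) / Real.sin ((s - θ)/2)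

lemma myct_hasDerivAt {θ s : ℝ} (h : Real.sin ((s - θ)/2) ≠ 0) :
    HasDerivAt (myct θ) (-(1 + myct θ s ^ 2)/2) s := by
  have h1 : HasDerivAt (fun s : ℝ => (s - θ)/2) (1/2) s := by
    simpa using ((hasDerivAt_id s).sub_const θ).div_const 2
  have hc : HasDerivAt (fun s : ℝ => Real.cos ((s - θ)/2))
      (-Real.sin ((s - θ)/2) * (1/2)) s := (Real.hasDerivAt_cos _).comp s h1
  have hs : HasDerivAt (fun s : ℝ => Real.sin ((s - θ)/2))
      (Real.cos ((s - θ)/2) * (1/2)) s := (Real.hasDerivAt_sin _).comp s h1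
  have := hc.div hs h
  refine HasDerivAt.congr_deriv this ?_
  have hpyth := Real.sin_sq_add_cos_sq ((s - θ)/2)
  unfold myct
  field_simp
  nlinarith [hpyth]

lemma core_ineq (f : ℝ → ℝ) (hf : ContDiff ℝ 1 f) {θ a b : ℝ} (hab : a ≤ b)
    (h1 : 0 < a - θ) (h2 : b - θ < 2*π) :
    (1/4) * (∫ s in a..b, f s ^ 2) +
      ((1/2) * myct θ b * f b ^ 2 - (1/2) * myct θ a * f a ^ 2)
      ≤ ∫ s in a..b, (deriv f s) ^ 2 := by
  have huIcc : Set.uIcc a b = Set.Icc a b := Set.uIcc_of_le hab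
  have hsin : ∀ s ∈ Set.uIcc a b, Real.sin ((s - θ)/2) ≠ 0 := by
    intro s hs
    rw [huIcc] at hs
    have h0 : 0 < (s - θ)/2 := by
      have := hs.1; linarith [h1]
    have hπ : (s - θ)/2 < π := by
      have := hs.2; have hπ' : s - θ < 2*π := by linarith
      linarith
    exact ne_of_gt (Real.sin_pos_of_pos_of_lt_pi h0 hπ)
  have hfd : ∀ s, HasDerivAt f (deriv f s) s := fun s =>
    (hf.differentiable one_ne_zero s).hasDerivAt
  set g' : ℝ → ℝ := fun s =>
    (1/2) * (-(1 + myct θ s ^ 2)/2) * f s ^ 2 + (1/2) * myct θ s * (2 * f s ^ 1 * deriv f s)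
    with hg'def
  have hg : ∀ s ∈ Set.uIcc a b,
      HasDerivAt (fun s => (1/2) * myct θ s * f s ^ 2) (g' s) s := by
    intro s hs
    exact ((myct_hasDerivAt (hsin s hs)).const_mul (1/2)).mul ((hfd s).pow 2)
  have hcont_f : Continuous f := hf.continuous
  have hcont_f' : Continuous (deriv f) := hf.continuous_deriv le_rfl
  have hcont_ct : ContinuousOn (myct θ) (Set.uIcc a b) := by
    apply ContinuousOn.div
    · exact (Real.continuous_cos.comp (by continuity)).continuousOn
    · exact (Real.continuous_sin.comp (by continuity)).continuousOn
    · exact hsin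
  have hcont_g' : ContinuousOn g' (Set.uIcc a b) := by
    apply ContinuousOn.add
    · exact (((continuousOn_const.mul ((continuousOn_const.add (hcont_ct.pow 2)).neg.div_const 2))).mul
        ((hcont_f.continuousOn).pow 2))
    · exact (continuousOn_const.mul hcont_ct).mul
        ((continuousOn_const.mul ((hcont_f.continuousOn.pow 1))).mul hcont_f'.continuousOn)
  have hint_g' : IntervalIntegrable g' volume a b := hcont_g'.intervalIntegrable
  have hFTC : ∫ s in a..b, g' s = (1/2) * myct θ b * f b ^ 2 - (1/2) * myct θ a * f a ^ 2 :=
    integral_eq_sub_of_hasDerivAt hg hint_g'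
  have hint_sq : IntervalIntegrable (fun s => (deriv f s - (1/2) * myct θ s * f s) ^ 2) volume a b := by
    apply ContinuousOn.intervalIntegrable
    exact ((hcont_f'.continuousOn.sub ((continuousOn_const.mul hcont_ct).mul hcont_f.continuousOn)).pow 2)
  have hint_f2 : IntervalIntegrable (fun s => f s ^ 2) volume a b :=
    ((hcont_f.pow 2)).intervalIntegrable _ _
  have hint_f'2 : IntervalIntegrable (fun s => (deriv f s) ^ 2) volume a b :=
    ((hcont_f'.pow 2)).intervalIntegrable _ _
  have hsplit : ∫ s in a..b, (deriv f s) ^ 2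
      = (∫ s in a..b, (deriv f s - (1/2) * myct θ s * f s) ^ 2)
        + ((∫ s in a..b, g' s) + (1/4) * ∫ s in a..b, f s ^ 2) := by
    rw [← intervalIntegral.integral_const_mul]
    rw [← intervalIntegral.integral_add hint_g' (hint_f2.const_mul (1/4))]
    rw [← intervalIntegral.integral_add hint_sq (hint_g'.add (hint_f2.const_mul (1/4)))]
    apply intervalIntegral.integral_congr
    intro s hs
    simp only [hg'def]
    ring
  have hnonneg : 0 ≤ ∫ s in a..b, (deriv f s - (1/2) * myct θ s * f s) ^ 2 :=
    intervalIntegral.integral_nonneg hab (fun s _ => sq_nonneg _)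
  rw [hsplit, hFTC]
  linarith




-- continuity of x ↦ ∫ x..b
lemma tendsto_integral_left_endpoint (h : ℝ → ℝ) (hh : Continuous h) (a b : ℝ) :
    Tendsto (fun x => ∫ s in x..b, h s) (𝓝[>] a) (𝓝 (∫ s in a..b, h s)) := by
  have hint : ∀ c d : ℝ, IntervalIntegrable h volume c d := fun c d =>
    hh.intervalIntegrable c d
  have hco : Continuous fun x => ∫ s in a..x, h s :=
    intervalIntegral.continuous_primitive (fun c d => hint c d) a
  have heq : (fun x => ∫ s in x..b, h s) = fun x => (∫ s in a..b, h s) - ∫ s in a..x, h s := by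
    funext x
    have := intervalIntegral.integral_add_adjacent_intervals (hint a x) (hint x b)
    linarith
  rw [heq]
  have : Tendsto (fun x => (∫ s in a..b, h s) - ∫ s in a..x, h s) (𝓝 a)
      (𝓝 ((∫ s in a..b, h s) - ∫ s in a..a, h s)) :=
    (tendsto_const_nhds.sub (hco.tendsto a))
  simpa using this.mono_left nhdsWithin_le_nhds

lemma boundary_tendsto_zero (f : ℝ → ℝ) (hf : ContDiff ℝ 1 f) {a : ℝ} (hfa : f a = 0) :
    Tendsto (fun x => (1/2) * myct a x * f x ^ 2) (𝓝[>] a) (𝓝 0) := by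
  -- bound on deriv
  obtain ⟨M, hM⟩ := (isCompact_Icc (a := a) (b := a + 1)).exists_bound_of_continuousOn
    (hf.continuous_deriv le_rfl).continuousOn
  have hMn : 0 ≤ M := le_trans (norm_nonneg _) (hM a (by constructor <;> linarith))
  have hlip : ∀ x ∈ Set.Icc a (a+1), |f x| ≤ M * (x - a) := by
    intro x hx
    have := norm_image_sub_le_of_norm_deriv_le_segment'
      (f := f) (f' := deriv f) (a := a) (b := a + 1) (C := M)
      (fun y hy => ((hf.differentiable one_ne_zero y).hasDerivAt).hasDerivWithinAt)
      (fun y hy => hM y (Set.Ico_subset_Icc_self hy)) x hx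
    simpa [hfa] using this
  apply squeeze_zero'
  · filter_upwards [Ioo_mem_nhdsGT_of_mem (Set.mem_Ico.2 ⟨le_refl a, by linarith⟩ :
      a ∈ Set.Ico a (a + 1/2))] with x hx
    have hxa : 0 < x - a := by linarith [hx.1]
    have hs : 0 < Real.sin ((x - a)/2) :=
      Real.sin_pos_of_pos_of_lt_pi (by linarith) (by nlinarith [Real.pi_gt_three, hx.2, hx.1])
    have hc : 0 ≤ Real.cos ((x - a)/2) := by
      apply Real.cos_nonneg_of_mem_Icc
      constructor
      · linarith [Real.pi_gt_three, hxa]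
      · nlinarith [Real.pi_gt_three, hx.2, hx.1]
    have : 0 ≤ myct a x := div_nonneg hc (le_of_lt hs)
    positivity
  · filter_upwards [Ioo_mem_nhdsGT_of_mem (Set.mem_Ico.2 ⟨le_refl a, by linarith⟩ :
      a ∈ Set.Ico a (a + 1/2))] with x hx
    have hxa : 0 < x - a := by linarith [hx.1]
    have hxa2 : x - a < 1/2 := by linarith [hx.2]
    set y := (x - a)/2 with hy
    have hy0 : 0 < y := by positivity
    have hy1 : y ≤ 1 := by rw [hy]; linarith
    have hsin_lb : (x - a)/4 ≤ Real.sin y := by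
      have h3 := Real.sin_gt_sub_cube hy0
      have hy2 : y^2 ≤ 1 := by nlinarith
      have hcube : y^3 ≤ y := by nlinarith [mul_le_mul_of_nonneg_left hy2 hy0.le]
      have : (x - a)/4 = y/2 := by rw [hy]; ring
      rw [this]
      nlinarith
    have hsinpos : 0 < Real.sin y := lt_of_lt_of_le (by linarith) hsin_lb
    have hctle : myct a x ≤ 4/(x - a) := by
      unfold myct
      rw [div_le_div_iff₀ hsinpos (by linarith)]
      calc Real.cos y * (x - a) ≤ 1 * (x - a) := by
            have := Real.cos_le_one y; nlinarith
        _ = (x - a) := by ring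
        _ ≤ 4 * Real.sin y := by nlinarith [hsin_lb]
    have hfb : |f x| ≤ M * (x - a) := hlip x ⟨le_of_lt hx.1, by linarith [hx.2]⟩
    have hf2 : f x ^ 2 ≤ (M * (x-a))^2 := by
      have := sq_abs (f x); nlinarith [abs_nonneg (f x)]
    calc (1/2) * myct a x * f x ^ 2 ≤ (1/2) * (4/(x-a)) * (M * (x-a))^2 := by
          have h0 : 0 ≤ myct a x := by
            have hs : 0 < Real.sin ((x - a)/2) := hsinpos
            have hc : 0 ≤ Real.cos ((x - a)/2) := by
              apply Real.cos_nonneg_of_mem_Icc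
              constructor
              · linarith [Real.pi_gt_three]
              · nlinarith [Real.pi_gt_three]
            exact div_nonneg hc (le_of_lt hs)
          have h4 : (0:ℝ) < 4/(x-a) := by positivity
          nlinarith [sq_nonneg (f x), hf2, mul_le_mul_of_nonneg_right hctle (sq_nonneg (M * (x-a)))]
      _ = 2 * M^2 * (x - a) := by field_simp; ring
  · have : Tendsto (fun x => 2 * M^2 * (x - a)) (𝓝 a) (𝓝 (2 * M^2 * (a - a))) := by
      apply Tendsto.const_mul
      exact (continuous_id.sub continuous_const).tendsto a
    simpa using this.mono_left nhdsWithin_le_nhds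

lemma left_vanish (f : ℝ → ℝ) (hf : ContDiff ℝ 1 f) {a b : ℝ} (hab : a < b)
    (hlen : b - a < 2*π) (hfa : f a = 0) :
    (1/4) * (∫ s in a..b, f s ^ 2) + (1/2) * (Real.cos ((b-a)/2) / Real.sin ((b-a)/2)) * f b ^ 2
      ≤ ∫ s in a..b, (deriv f s) ^ 2 := by
  have hcf : Continuous fun s => f s ^ 2 := (hf.continuous.pow 2)
  have hcf' : Continuous fun s => (deriv f s) ^ 2 := ((hf.continuous_deriv le_rfl).pow 2)
  have T1 : Tendsto (fun x => (1/4) * (∫ s in x..b, f s ^ 2) + (1/2) * myct a b * f b ^ 2)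
      (𝓝[>] a) (𝓝 ((1/4) * (∫ s in a..b, f s ^ 2) + (1/2) * myct a b * f b ^ 2)) :=
    ((tendsto_integral_left_endpoint _ hcf a b).const_mul _).add tendsto_const_nhds
  have T2 : Tendsto (fun x => (∫ s in x..b, (deriv f s) ^ 2) + (1/2) * myct a x * f x ^ 2)
      (𝓝[>] a) (𝓝 ((∫ s in a..b, (deriv f s) ^ 2) + 0)) :=
    (tendsto_integral_left_endpoint _ hcf' a b).add (boundary_tendsto_zero f hf hfa)
  have hev : ∀ᶠ x in 𝓝[>] a,
      (1/4) * (∫ s in x..b, f s ^ 2) + (1/2) * myct a b * f b ^ 2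
        ≤ (∫ s in x..b, (deriv f s) ^ 2) + (1/2) * myct a x * f x ^ 2 := by
    filter_upwards [Ioo_mem_nhdsGT_of_mem (Set.mem_Ico.2 ⟨le_refl a, hab⟩ : a ∈ Set.Ico a b)]
      with x hx
    have := core_ineq f hf (θ := a) (a := x) (b := b) (le_of_lt hx.2)
      (by linarith [hx.1]) (by linarith)
    linarith
  have := le_of_tendsto_of_tendsto T1 T2 hev
  simpa [myct] using this

lemma right_vanish (f : ℝ → ℝ) (hf : ContDiff ℝ 1 f) {a b : ℝ} (hab : a < b)
    (hlen : b - a < 2*π) (hfb : f b = 0) :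
    (1/4) * (∫ s in a..b, f s ^ 2) + (1/2) * (Real.cos ((b-a)/2) / Real.sin ((b-a)/2)) * f a ^ 2
      ≤ ∫ s in a..b, (deriv f s) ^ 2 := by
  set g : ℝ → ℝ := fun s => f (a + b - s) with hgdef
  have hgC : ContDiff ℝ 1 g := hf.comp (contDiff_const.sub contDiff_id)
  have hga : g a = 0 := by simp [hgdef, hfb]
  have hgb : g b = f a := by simp [hgdef]
  have hd : ∀ s, HasDerivAt g (deriv f (a + b - s) * (-1)) s := by
    intro s
    have hs0 : HasDerivAt (fun x : ℝ => a + b - x) (-1) s := by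
      simpa using ((hasDerivAt_id' s).const_sub (a+b))
    exact ((hf.differentiable one_ne_zero (a + b - s)).hasDerivAt).comp s hs0
  have hderiv_g : ∀ s, deriv g s = -(deriv f (a + b - s)) := by
    intro s; rw [(hd s).deriv]; ring
  have h1 := left_vanish g hgC hab hlen hga
  have e1 : (∫ s in a..b, g s ^ 2) = ∫ s in a..b, f s ^ 2 := by
    have := intervalIntegral.integral_comp_sub_left (a := a) (b := b)
      (fun s => f s ^ 2) (a + b)
    simpa [hgdef] using this
  have e2 : (∫ s in a..b, (deriv g s) ^ 2) = ∫ s in a..b, (deriv f s) ^ 2 := by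
    have heq : (fun s => (deriv g s) ^ 2) = fun s => (deriv f (a + b - s)) ^ 2 := by
      funext s; rw [hderiv_g]; ring
    rw [heq]
    have := intervalIntegral.integral_comp_sub_left (a := a) (b := b)
      (fun s => (deriv f s) ^ 2) (a + b)
    simpa using this
  rw [e1, e2, hgb] at h1
  exact h1

lemma one_zero (f : ℝ → ℝ) (hf : ContDiff ℝ 1 f) {c : ℝ} (hc : c ∈ Set.Icc 0 (2*π))
    (hfc : f c = 0) (hb : f 0 ^ 2 = f (2*π) ^ 2) :
    (1/4) * (∫ s in (0:ℝ)..(2*π), f s ^ 2) ≤ ∫ s in (0:ℝ)..(2*π), (deriv f s) ^ 2 := by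
  have hπ : 0 < π := Real.pi_pos
  have hcf2 : ∀ u v : ℝ, IntervalIntegrable (fun s => f s ^ 2) volume u v :=
    fun u v => ((hf.continuous.pow 2)).intervalIntegrable u v
  have hcf'2 : ∀ u v : ℝ, IntervalIntegrable (fun s => (deriv f s) ^ 2) volume u v :=
    fun u v => (((hf.continuous_deriv le_rfl).pow 2)).intervalIntegrable u v
  rcases eq_or_lt_of_le hc.1 with h0 | h0
  · -- c = 0, so f 0 = 0 and f (2π) = 0
    have hf0 : f 0 = 0 := by rw [← h0] at hfc; exact hfc
    have hf2π : f (2*π) = 0 := by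
      have : f (2*π) ^ 2 = 0 := by rw [← hb, hf0]; ring
      exact pow_eq_zero_iff (n := 2) (by norm_num) |>.mp this
    have hL := left_vanish f hf (a := 0) (b := π) hπ (by linarith) hf0
    have hR := right_vanish f hf (a := π) (b := 2*π) (by linarith) (by linarith) hf2π
    have hzero : Real.cos ((π - 0)/2) = 0 := by
      rw [show (π - 0)/2 = π/2 by ring]; exact Real.cos_pi_div_two
    have hzero' : Real.cos ((2*π - π)/2) = 0 := by
      rw [show (2*π - π)/2 = π/2 by ring]; exact Real.cos_pi_div_two
    rw [hzero] at hL; rw [hzero'] at hR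
    have hs1 := intervalIntegral.integral_add_adjacent_intervals (hcf2 0 π) (hcf2 π (2*π))
    have hs2 := intervalIntegral.integral_add_adjacent_intervals (hcf'2 0 π) (hcf'2 π (2*π))
    rw [← hs1, ← hs2]
    simp only [zero_div, zero_mul, mul_zero, add_zero] at hL hR
    linarith
  rcases eq_or_lt_of_le hc.2 with h2 | h2
  · -- c = 2π
    have hf2π : f (2*π) = 0 := by rw [← h2]; exact hfc
    have hf0 : f 0 = 0 := by
      have : f 0 ^ 2 = 0 := by rw [hb, hf2π]; ring
      exact pow_eq_zero_iff (n := 2) (by norm_num) |>.mp this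
    have hL := left_vanish f hf (a := 0) (b := π) hπ (by linarith) hf0
    have hR := right_vanish f hf (a := π) (b := 2*π) (by linarith) (by linarith) hf2π
    have hzero : Real.cos ((π - 0)/2) = 0 := by
      rw [show (π - 0)/2 = π/2 by ring]; exact Real.cos_pi_div_two
    have hzero' : Real.cos ((2*π - π)/2) = 0 := by
      rw [show (2*π - π)/2 = π/2 by ring]; exact Real.cos_pi_div_two
    rw [hzero] at hL; rw [hzero'] at hR
    have hs1 := intervalIntegral.integral_add_adjacent_intervals (hcf2 0 π) (hcf2 π (2*π))
    have hs2 := intervalIntegral.integral_add_adjacent_intervals (hcf'2 0 π) (hcf'2 π (2*π))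
    rw [← hs1, ← hs2]
    simp only [zero_div, zero_mul, mul_zero, add_zero] at hL hR
    linarith
  · -- 0 < c < 2π
    have hR := right_vanish f hf (a := 0) (b := c) h0 (by linarith) hfc
    have hL := left_vanish f hf (a := c) (b := 2*π) h2 (by linarith) hfc
    have hcos : Real.cos ((2*π - c)/2) = -Real.cos (c/2) := by
      rw [show (2*π - c)/2 = π - c/2 by ring, Real.cos_pi_sub]
    have hsin : Real.sin ((2*π - c)/2) = Real.sin (c/2) := by
      rw [show (2*π - c)/2 = π - c/2 by ring, Real.sin_pi_sub]
    rw [hcos, hsin] at hL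
    rw [show (c - 0)/2 = c/2 by ring] at hR
    have hs1 := intervalIntegral.integral_add_adjacent_intervals (hcf2 0 c) (hcf2 c (2*π))
    have hs2 := intervalIntegral.integral_add_adjacent_intervals (hcf'2 0 c) (hcf'2 c (2*π))
    rw [← hs1, ← hs2]
    have : (1/2) * (-Real.cos (c/2) / Real.sin (c/2)) * f (2*π) ^ 2
        = -((1/2) * (Real.cos (c/2) / Real.sin (c/2)) * f 0 ^ 2) := by
      rw [← hb]; ring
    rw [this] at hL
    linarith

lemma exists_onb (p q : EuclideanSpace ℝ (Fin 3)) (hp : ‖p‖ = 1) (hq : ‖q‖ = 1) :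
    ∃ b : OrthonormalBasis (Fin 3) ℝ (EuclideanSpace ℝ (Fin 3)),
      ∀ k, ⟪p, b k⟫ ^ 2 = ⟪q, b k⟫ ^ 2 := by
  by_cases hpq : p = q
  · refine ⟨(stdOrthonormalBasis ℝ (EuclideanSpace ℝ (Fin 3))).reindex
      (finCongr (by simp [finrank_euclideanSpace_fin])), fun k => by rw [hpq]⟩
  · have hne : p - q ≠ 0 := sub_ne_zero.2 hpq
    have hnorm : ‖p - q‖ ≠ 0 := norm_ne_zero_iff.2 hne
    set w : EuclideanSpace ℝ (Fin 3) := ‖p - q‖⁻¹ • (p - q) with hwdef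
    have hw : ‖w‖ = 1 := by
      rw [hwdef, norm_smul, norm_inv, norm_norm, inv_mul_cancel₀ hnorm]
    have hcard : Module.finrank ℝ (EuclideanSpace ℝ (Fin 3)) = Fintype.card (Fin 3) := by
      simp [finrank_euclideanSpace_fin]
    have hv : Orthonormal ℝ (Set.restrict {(0 : Fin 3)} (fun _ : Fin 3 => w)) := by
      constructor
      · intro i; exact hw
      · rintro ⟨i, hi⟩ ⟨j, hj⟩ hij
        exfalso
        apply hij
        simp only [Set.mem_singleton_iff] at hi hj
        exact Subtype.ext (hi.trans hj.symm)
    obtain ⟨b, hb⟩ := hv.exists_orthonormalBasis_extension_of_card_eq hcard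
    have hb0 : b 0 = w := hb 0 rfl
    refine ⟨b, fun k => ?_⟩
    by_cases hk : k = 0
    · subst hk
      rw [hb0]
      have hsum : ⟪p, w⟫ + ⟪q, w⟫ = 0 := by
        have hinner : ⟪p + q, p - q⟫ = 0 := by
          have h1 : ⟪p + q, p - q⟫ = ⟪p, p⟫ - ⟪q, q⟫ + (⟪q, p⟫ - ⟪p, q⟫) := by
            rw [inner_add_left, inner_sub_right, inner_sub_right]; ring
          rw [h1, real_inner_comm q p, real_inner_self_eq_norm_sq, real_inner_self_eq_norm_sq,
            hp, hq]
          ring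
        have : ⟪p, w⟫ + ⟪q, w⟫ = ‖p - q‖⁻¹ * ⟪p + q, p - q⟫ := by
          rw [hwdef, real_inner_smul_right, real_inner_smul_right, inner_add_left]
          ring
        rw [this, hinner, mul_zero]
      have h2 : ⟪p, w⟫ = -⟪q, w⟫ := by linarith
      rw [h2]; ring
    · have horth : ⟪b k, b 0⟫ = 0 := b.orthonormal.2 hk
      rw [hb0] at horth
      have h1 : ⟪p - q, b k⟫ = ‖p - q‖ * ⟪w, b k⟫ := by
        have hpq' : p - q = ‖p - q‖ • w := by
          rw [hwdef, smul_smul, mul_inv_cancel₀ hnorm, one_smul]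
        nth_rewrite 1 [hpq']
        rw [real_inner_smul_left]
      have h2 : ⟪w, b k⟫ = 0 := by rw [real_inner_comm]; exact horth
      have h3 : ⟪p, b k⟫ - ⟪q, b k⟫ = 0 := by
        rw [← inner_sub_left, h1, h2, mul_zero]
      have h4 : ⟪p, b k⟫ = ⟪q, b k⟫ := by linarith
      rw [h4]

lemma exists_zero_of_integral (g : ℝ → ℝ) (hg : Continuous g)
    (hI : (∫ s in (0:ℝ)..(2*π), g s) = 0) :
    ∃ c ∈ Set.Icc (0:ℝ) (2*π), g c = 0 := by
  have hπ : 0 < 2*π := by linarith [Real.pi_pos]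
  by_contra hcon
  push_neg at hcon
  have hsign : (∀ x ∈ Set.Icc (0:ℝ) (2*π), 0 < g x) ∨ (∀ x ∈ Set.Icc (0:ℝ) (2*π), g x < 0) := by
    by_contra hs
    push_neg at hs
    obtain ⟨⟨x, hx, hxle⟩, ⟨y, hy, hyge⟩⟩ := hs
    have hxneg' : g x < 0 := lt_of_le_of_ne hxle (hcon x hx)
    have hypos' : 0 < g y := lt_of_le_of_ne hyge (Ne.symm (hcon y hy))
    have hsub : Set.uIcc x y ⊆ Set.Icc (0:ℝ) (2*π) := Set.uIcc_subset_Icc hx hy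
    have : (0:ℝ) ∈ Set.uIcc (g x) (g y) := Set.mem_uIcc.2 (Or.inl ⟨hxneg'.le, hypos'.le⟩)
    obtain ⟨c, hc, hgc⟩ := intermediate_value_uIcc (hg.continuousOn) this
    exact hcon c (hsub hc) hgc
  rcases hsign with hpos | hneg
  · have : 0 < ∫ s in (0:ℝ)..(2*π), g s :=
      intervalIntegral.intervalIntegral_pos_of_pos_on (hg.intervalIntegrable _ _)
        (fun x hx => hpos x ⟨hx.1.le, hx.2.le⟩) hπ
    linarith [this, hI.le]
  · have : 0 < ∫ s in (0:ℝ)..(2*π), -g s :=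
      intervalIntegral.intervalIntegral_pos_of_pos_on ((hg.neg).intervalIntegrable _ _)
        (fun x hx => neg_pos.2 (hneg x ⟨hx.1.le, hx.2.le⟩)) hπ
    rw [intervalIntegral.integral_neg, hI] at this
    simp at this

theorem stmt2 (κ : ℝ → ℝ) (u : ℝ → EuclideanSpace ℝ (Fin 3))
    (hκ : ContinuousOn κ (Set.Icc 0 (2 * π)))
    (hu : ContDiff ℝ 1 u)
    (hunorm : ∀ s, ‖u s‖ = 1)
    (hukappa : ∀ s, ‖deriv u s‖ = κ s)
    (hint : (∫ s in (0:ℝ)..(2 * π), u s) = 0)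
    (ψ : ℝ → ℝ) (hψ : ContDiff ℝ 1 ψ)
    (hψper : Function.Periodic ψ (2 * π))
    (hψnorm : (∫ s in (0:ℝ)..(2 * π), (ψ s) ^ 2) = 1) :
    (1 : ℝ) / 4 ≤ ∫ s in (0:ℝ)..(2 * π), ((deriv ψ s) ^ 2 + (κ s) ^ 2 * (ψ s) ^ 2) := by
  have hud : ∀ s, HasDerivAt u (deriv u s) s := fun s => (hu.differentiable one_ne_zero s).hasDerivAt
  have hψd : ∀ s, HasDerivAt ψ (deriv ψ s) s := fun s => (hψ.differentiable one_ne_zero s).hasDerivAt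
  have hu_cont : Continuous u := hu.continuous
  have hu'_cont : Continuous (deriv u) := hu.continuous_deriv le_rfl
  have hinner_uu : ∀ s, ⟪u s, u s⟫ = 1 := by
    intro s
    rw [real_inner_self_eq_norm_sq, hunorm]
    norm_num
  have horth : ∀ s, ⟪u s, deriv u s⟫ = 0 := by
    intro s
    have h1 : HasDerivAt (fun t => ⟪u t, u t⟫)
        (⟪u s, deriv u s⟫ + ⟪deriv u s, u s⟫) s := HasDerivAt.inner ℝ (hud s) (hud s)
    have heq : (fun t => ⟪u t, u t⟫) = fun _ : ℝ => (1:ℝ) := funext hinner_uu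
    rw [heq] at h1
    have h2 := h1.unique (hasDerivAt_const s 1)
    have h3 := real_inner_comm (u s) (deriv u s)
    linarith
  obtain ⟨b, hbsq⟩ := exists_onb (u 0) (u (2*π)) (hunorm 0) (hunorm (2*π))
  set F : Fin 3 → ℝ → ℝ := fun k s => ψ s * ⟪u s, b k⟫ with hFdef
  have hFc : ∀ k, ContDiff ℝ 1 (F k) := fun k => hψ.mul (ContDiff.inner ℝ hu contDiff_const)
  have hF' : ∀ k s, HasDerivAt (F k)
      (deriv ψ s * ⟪u s, b k⟫ + ψ s * ⟪deriv u s, b k⟫) s := by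
    intro k s
    have h1 : HasDerivAt (fun t => ⟪u t, b k⟫) (⟪deriv u s, b k⟫) s := by
      have := HasDerivAt.inner ℝ (hud s) (hasDerivAt_const s (b k))
      simpa using this
    exact (hψd s).mul h1
  have hderivF : ∀ k s, deriv (F k) s
      = deriv ψ s * ⟪u s, b k⟫ + ψ s * ⟪deriv u s, b k⟫ := fun k s => (hF' k s).deriv
  -- Parseval-type sums
  have hsumA : ∀ s, (∑ k, ⟪u s, b k⟫ ^ 2) = 1 := by
    intro s
    have h := b.sum_inner_mul_inner (u s) (u s)
    rw [hinner_uu] at h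
    rw [← h]
    exact Finset.sum_congr rfl fun k _ => by rw [real_inner_comm (b k) (u s)]; ring
  have hsumB : ∀ s, (∑ k, ⟪deriv u s, b k⟫ ^ 2) = κ s ^ 2 := by
    intro s
    have h := b.sum_inner_mul_inner (deriv u s) (deriv u s)
    rw [real_inner_self_eq_norm_sq, hukappa] at h
    rw [← h]
    exact Finset.sum_congr rfl fun k _ => by rw [real_inner_comm (b k) (deriv u s)]; ring
  have hsumC : ∀ s, (∑ k, ⟪u s, b k⟫ * ⟪deriv u s, b k⟫) = 0 := by
    intro s
    have h := b.sum_inner_mul_inner (u s) (deriv u s)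
    rw [horth] at h
    rw [← h]
    exact Finset.sum_congr rfl fun k _ => by rw [real_inner_comm (b k) (deriv u s)]
  -- pointwise identity
  have hpt : ∀ s, (∑ k, (deriv (F k) s) ^ 2) = (deriv ψ s) ^ 2 + κ s ^ 2 * ψ s ^ 2 := by
    intro s
    have expand : ∀ k : Fin 3, (deriv (F k) s) ^ 2
        = (deriv ψ s) ^ 2 * ⟪u s, b k⟫ ^ 2
          + (2 * deriv ψ s * ψ s) * (⟪u s, b k⟫ * ⟪deriv u s, b k⟫)
          + ψ s ^ 2 * ⟪deriv u s, b k⟫ ^ 2 := fun k => by rw [hderivF]; ring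
    rw [Finset.sum_congr rfl fun k _ => expand k]
    rw [Finset.sum_add_distrib, Finset.sum_add_distrib,
      ← Finset.mul_sum, ← Finset.mul_sum, ← Finset.mul_sum, hsumA, hsumB, hsumC]
    ring
  have hptF : ∀ s, (∑ k, (F k s) ^ 2) = ψ s ^ 2 := by
    intro s
    have expand : ∀ k : Fin 3, (F k s) ^ 2 = ψ s ^ 2 * ⟪u s, b k⟫ ^ 2 := fun k => by
      simp only [hFdef]; ring
    rw [Finset.sum_congr rfl fun k _ => expand k, ← Finset.mul_sum, hsumA, mul_one]
  -- zero of each component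
  have hzero : ∀ k, ∃ c ∈ Set.Icc (0:ℝ) (2*π), ⟪u c, b k⟫ = 0 := by
    intro k
    apply exists_zero_of_integral _ (hu_cont.inner continuous_const)
    have huint : IntervalIntegrable u volume 0 (2*π) := hu_cont.intervalIntegrable 0 (2*π)
    have hL := (innerSL ℝ (b k)).intervalIntegral_comp_comm huint
    have : (∫ s in (0:ℝ)..(2*π), ⟪b k, u s⟫) = ⟪b k, (∫ s in (0:ℝ)..(2*π), u s)⟫ := by
      simpa [innerSL_apply_apply] using hL
    rw [hint, inner_zero_right] at this
    have hflip : (∫ s in (0:ℝ)..(2*π), ⟪u s, b k⟫) = ∫ s in (0:ℝ)..(2*π), ⟪b k, u s⟫ :=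
      intervalIntegral.integral_congr fun s _ => real_inner_comm (b k) (u s)
    rw [hflip]
    exact this
  -- key inequality for each component
  have hkey : ∀ k, (1/4) * (∫ s in (0:ℝ)..(2*π), (F k s) ^ 2)
      ≤ ∫ s in (0:ℝ)..(2*π), (deriv (F k) s) ^ 2 := by
    intro k
    obtain ⟨c, hc, hc0⟩ := hzero k
    have hψp : ψ (2*π) = ψ 0 := by
      have := hψper 0
      simpa using this
    apply one_zero (F k) (hFc k) hc
    · simp only [hFdef]; rw [hc0, mul_zero]
    · simp only [hFdef]
      rw [hψp, mul_pow, mul_pow, hbsq k]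
  -- integrability
  have hintF2 : ∀ k : Fin 3, IntervalIntegrable (fun s => (F k s) ^ 2) volume 0 (2*π) :=
    fun k => (((hFc k).continuous.pow 2)).intervalIntegrable _ _
  have hintF'2 : ∀ k : Fin 3, IntervalIntegrable (fun s => (deriv (F k) s) ^ 2) volume 0 (2*π) :=
    fun k => ((((hFc k).continuous_deriv le_rfl).pow 2)).intervalIntegrable _ _
  -- put it together
  have hmain : (∫ s in (0:ℝ)..(2*π), ((deriv ψ s) ^ 2 + (κ s) ^ 2 * (ψ s) ^ 2))
      = ∑ k, ∫ s in (0:ℝ)..(2*π), (deriv (F k) s) ^ 2 := by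
    rw [← intervalIntegral.integral_finset_sum (fun k _ => hintF'2 k)]
    exact intervalIntegral.integral_congr fun s _ => (hpt s).symm
  have hmainF : (∑ k, ∫ s in (0:ℝ)..(2*π), (F k s) ^ 2) = 1 := by
    rw [← intervalIntegral.integral_finset_sum (fun k _ => hintF2 k)]
    rw [← hψnorm]
    exact intervalIntegral.integral_congr fun s _ => hptF s
  have hsum_ineq : (∑ k : Fin 3, (1/4) * (∫ s in (0:ℝ)..(2*π), (F k s) ^ 2))
      ≤ ∑ k, ∫ s in (0:ℝ)..(2*π), (deriv (F k) s) ^ 2 :=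
    Finset.sum_le_sum fun k _ => hkey k
  rw [← Finset.mul_sum, hmainF, mul_one] at hsum_ineq
  rw [hmain]
  linarith
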